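/- Let n ∈ ℕ and let a, b, c, d be integers with ad − bc = 1. Then the diffeomorphism F of ℝ³ defined by F(x,y,z) = (x + n(bc·yz + (ac/2)(y² − y) + (bd/2)(z² − z)), ay + bz, cy + dz) normalizes the group Γ_n, i.e. F·Γ_n·F⁻¹ = Γ_n. -/

import Mathlib

noncomputable section

/-- The bijection `(x,y,z) ↦ (x + φ(y,z), y + ψ(z), z + b)` of `ℝ³`. -/
def affMap (φ : ℝ × ℝ → ℝ) (ψ : ℝ → ℝ) (b : ℝ) : Equiv.Perm (ℝ × ℝ × ℝ) where
  toFun p := (p.1 + φ p.2, p.2.1 + ψ p.2.2, p.2.2 + b)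
  invFun p := (p.1 - φ (p.2.1 - ψ (p.2.2 - b), p.2.2 - b), p.2.1 - ψ (p.2.2 - b), p.2.2 - b)
  left_inv := by rintro ⟨x, y, z⟩; simp
  right_inv := by rintro ⟨x, y, z⟩; simp

/-- The group `Γ_{n,c₁,c₂}`, generated by `(x,y,z) ↦ (x+1,y,z)`,
`(x,y,z) ↦ (x+c₁,y+1,z)` and `(x,y,z) ↦ (x+ny+c₂,y,z+1)`. -/
def Gamma (n : ℕ) (c₁ c₂ : ℝ) : Subgroup (Equiv.Perm (ℝ × ℝ × ℝ)) :=
  Subgroup.closure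
    { affMap (fun _ => 1) (fun _ => 0) 0,
      affMap (fun _ => c₁) (fun _ => 1) 0,
      affMap (fun q => n * q.1 + c₂) (fun _ => 0) 1 }

def gg (n : ℕ) (m p q : ℤ) : Equiv.Perm (ℝ × ℝ × ℝ) :=
  affMap (fun s => (n : ℝ) * (q : ℝ) * s.1 + (m : ℝ)) (fun _ => (p : ℝ)) (q : ℝ)

lemma gg_congr {n : ℕ} {m p q m' p' q' : ℤ} (h1 : m = m') (h2 : p = p') (h3 : q = q') :
    gg n m p q = gg n m' p' q' := by subst h1; subst h2; subst h3; rfl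

lemma gg_mul (n : ℕ) (m p q m' p' q' : ℤ) :
    gg n m p q * gg n m' p' q' = gg n (m + m' + (n : ℤ) * q * p') (p + p') (q + q') := by
  apply Equiv.ext; rintro ⟨x, y, z⟩
  simp only [gg, affMap, Equiv.Perm.mul_apply, Equiv.coe_fn_mk, Prod.mk.injEq]
  refine ⟨?_, ?_, ?_⟩ <;> push_cast <;> ring

lemma gg_one (n : ℕ) : gg n 0 0 0 = 1 := by
  apply Equiv.ext; rintro ⟨x, y, z⟩
  simp [gg, affMap]

lemma zpow_of_rec {G : Type*} [Group G] (f : ℤ → G) (h0 : f 0 = 1)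
    (hs : ∀ k : ℤ, f (k + 1) = f k * f 1) : ∀ k : ℤ, f k = (f 1) ^ k := by
  intro k
  induction k using Int.induction_on with
  | zero => rw [zpow_zero, h0]
  | succ k ih => rw [hs, ih, zpow_add_one]
  | pred k ih =>
    have h2 := hs (-(k : ℤ) - 1)
    rw [show (-(k : ℤ) - 1 + 1) = -(k : ℤ) by ring] at h2
    have h3 : f (-(k : ℤ) - 1) = f (-(k : ℤ)) * (f 1)⁻¹ := by rw [h2]; group
    rw [h3, ih, ← zpow_sub_one]

lemma gg_m (n : ℕ) (m : ℤ) : gg n m 0 0 = (gg n 1 0 0) ^ m := by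
  refine zpow_of_rec (fun m => gg n m 0 0) (gg_one n) (fun k => ?_) m
  rw [gg_mul]; exact gg_congr (by ring) (by ring) (by ring)

lemma gg_p (n : ℕ) (p : ℤ) : gg n 0 p 0 = (gg n 0 1 0) ^ p := by
  refine zpow_of_rec (fun p => gg n 0 p 0) (gg_one n) (fun k => ?_) p
  rw [gg_mul]; exact gg_congr (by ring) (by ring) (by ring)

lemma gg_q (n : ℕ) (q : ℤ) : gg n 0 0 q = (gg n 0 0 1) ^ q := by
  refine zpow_of_rec (fun q => gg n 0 0 q) (gg_one n) (fun k => ?_) q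
  rw [gg_mul]; exact gg_congr (by ring) (by ring) (by ring)

lemma gg_e1 (n : ℕ) : gg n 1 0 0 = affMap (fun _ => 1) (fun _ => 0) 0 := by
  apply Equiv.ext; rintro ⟨x, y, z⟩; simp [gg, affMap]

lemma gg_e2 (n : ℕ) : gg n 0 1 0 = affMap (fun _ => (0 : ℝ)) (fun _ => 1) 0 := by
  apply Equiv.ext; rintro ⟨x, y, z⟩; simp [gg, affMap]

lemma gg_e3 (n : ℕ) : gg n 0 0 1 = affMap (fun s => (n : ℝ) * s.1 + 0) (fun _ => 0) 1 := by
  apply Equiv.ext; rintro ⟨x, y, z⟩; simp [gg, affMap]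

lemma gg_mem (n : ℕ) (m p q : ℤ) : gg n m p q ∈ Gamma n 0 0 := by
  have h1 : gg n 1 0 0 ∈ Gamma n 0 0 := by
    rw [gg_e1]; exact Subgroup.subset_closure (by simp)
  have h2 : gg n 0 1 0 ∈ Gamma n 0 0 := by
    rw [gg_e2]; exact Subgroup.subset_closure (by simp)
  have h3 : gg n 0 0 1 ∈ Gamma n 0 0 := by
    rw [gg_e3]; exact Subgroup.subset_closure (by simp)
  have key : gg n m p q = (gg n 1 0 0) ^ m * ((gg n 0 1 0) ^ p * (gg n 0 0 1) ^ q) := by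
    rw [← gg_m, ← gg_p, ← gg_q, gg_mul, gg_mul]
    exact gg_congr (by ring) (by ring) (by ring)
  rw [key]
  exact mul_mem (zpow_mem h1 m) (mul_mem (zpow_mem h2 p) (zpow_mem h3 q))

def GammaFull (n : ℕ) : Subgroup (Equiv.Perm (ℝ × ℝ × ℝ)) where
  carrier := {π | ∃ m p q : ℤ, π = gg n m p q}
  one_mem' := ⟨0, 0, 0, (gg_one n).symm⟩
  mul_mem' := by
    rintro _ _ ⟨m, p, q, rfl⟩ ⟨m', p', q', rfl⟩
    exact ⟨_, _, _, gg_mul n m p q m' p' q'⟩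
  inv_mem' := by
    rintro _ ⟨m, p, q, rfl⟩
    refine ⟨(n : ℤ) * q * p - m, -p, -q, ?_⟩
    apply inv_eq_of_mul_eq_one_right
    rw [gg_mul,
      gg_congr (show m + ((n : ℤ) * q * p - m) + (n : ℤ) * q * (-p) = 0 by ring)
        (show p + -p = 0 by ring) (show q + -q = 0 by ring), gg_one]

lemma mem_gamma_iff (n : ℕ) (π : Equiv.Perm (ℝ × ℝ × ℝ)) :
    π ∈ Gamma n 0 0 ↔ ∃ m p q : ℤ, π = gg n m p q := by
  constructor
  · intro hπ
    have hle : Gamma n 0 0 ≤ GammaFull n := by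
      rw [Gamma, Subgroup.closure_le]
      rintro g hg
      simp only [Set.mem_insert_iff, Set.mem_singleton_iff] at hg
      rcases hg with rfl | rfl | rfl
      exacts [⟨1, 0, 0, (gg_e1 n).symm⟩, ⟨0, 1, 0, (gg_e2 n).symm⟩, ⟨0, 0, 1, (gg_e3 n).symm⟩]
    exact hle hπ
  · rintro ⟨m, p, q, rfl⟩; exact gg_mem n m p q

def QR (n : ℕ) (a b c d : ℤ) (y z : ℝ) : ℝ :=
  (n : ℝ) * ((b : ℝ) * (c : ℝ) * y * z + ((a : ℝ) * (c : ℝ) / 2) * (y ^ 2 - y)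
    + ((b : ℝ) * (d : ℝ) / 2) * (z ^ 2 - z))

lemma QR_int (n : ℕ) (a b c d p q : ℤ) :
    ∃ e : ℤ, (e : ℝ) = QR n a b c d (p : ℝ) (q : ℝ) := by
  obtain ⟨k1, hk1⟩ := Int.even_mul_succ_self (p - 1)
  obtain ⟨k2, hk2⟩ := Int.even_mul_succ_self (q - 1)
  refine ⟨(n : ℤ) * (b * c * p * q + a * c * k1 + b * d * k2), ?_⟩
  have h1 : (k1 : ℝ) = ((p : ℝ) ^ 2 - p) / 2 := by
    have h := congrArg (Int.cast : ℤ → ℝ) hk1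
    push_cast at h
    rw [eq_div_iff (two_ne_zero)]
    linarith
  have h2 : (k2 : ℝ) = ((q : ℝ) ^ 2 - q) / 2 := by
    have h := congrArg (Int.cast : ℤ → ℝ) hk2
    push_cast at h
    rw [eq_div_iff (two_ne_zero)]
    linarith
  simp only [QR]
  push_cast
  linear_combination ((n : ℝ) * a * c) * h1 + ((n : ℝ) * b * d) * h2

def Fm (n : ℕ) (a b c d : ℤ) (h : a * d - b * c = 1) : Equiv.Perm (ℝ × ℝ × ℝ) where
  toFun p := (p.1 + QR n a b c d p.2.1 p.2.2,
    (a : ℝ) * p.2.1 + (b : ℝ) * p.2.2, (c : ℝ) * p.2.1 + (d : ℝ) * p.2.2)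
  invFun p := (p.1 - QR n a b c d ((d : ℝ) * p.2.1 - (b : ℝ) * p.2.2)
      (-(c : ℝ) * p.2.1 + (a : ℝ) * p.2.2),
    (d : ℝ) * p.2.1 - (b : ℝ) * p.2.2, -(c : ℝ) * p.2.1 + (a : ℝ) * p.2.2)
  left_inv := by
    have hR : (a : ℝ) * d - b * c = 1 := by exact_mod_cast h
    rintro ⟨x, y, z⟩
    simp only
    have hy : (d : ℝ) * ((a : ℝ) * y + (b : ℝ) * z) - (b : ℝ) * ((c : ℝ) * y + (d : ℝ) * z) = y := by
      linear_combination y * hR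
    have hz : -(c : ℝ) * ((a : ℝ) * y + (b : ℝ) * z) + (a : ℝ) * ((c : ℝ) * y + (d : ℝ) * z) = z := by
      linear_combination z * hR
    rw [hy, hz]
    simp
  right_inv := by
    have hR : (a : ℝ) * d - b * c = 1 := by exact_mod_cast h
    rintro ⟨x, y, z⟩
    simp only [Prod.mk.injEq]
    refine ⟨by ring, by linear_combination y * hR, by linear_combination z * hR⟩

lemma conj1 (n : ℕ) (a b c d : ℤ) (h : a * d - b * c = 1) (m p q e : ℤ)
    (he : (e : ℝ) = QR n a b c d (p : ℝ) (q : ℝ)) :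
    Fm n a b c d h * gg n m p q * (Fm n a b c d h)⁻¹
      = gg n (m + e) (a * p + b * q) (c * p + d * q) := by
  have hR : (a : ℝ) * d - b * c = 1 := by exact_mod_cast h
  simp only [QR] at he
  apply Equiv.ext; rintro ⟨x, y, z⟩
  simp only [Fm, gg, affMap, QR, Equiv.Perm.mul_apply, Equiv.Perm.inv_def,
    Equiv.coe_fn_mk, Equiv.coe_fn_symm_mk, Prod.mk.injEq]
  push_cast
  refine ⟨?_, ?_, ?_⟩
  · linear_combination ((c : ℝ) * n * p * y + (b : ℝ) * n * q * z) * hR - he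
  · linear_combination y * hR
  · linear_combination z * hR

lemma conj2 (n : ℕ) (a b c d : ℤ) (h : a * d - b * c = 1) (m p q e : ℤ)
    (he : (e : ℝ) = QR n a b c d ((d : ℝ) * p - (b : ℝ) * q) (-(c : ℝ) * p + (a : ℝ) * q)) :
    (Fm n a b c d h)⁻¹ * gg n m p q * Fm n a b c d h
      = gg n (m - e) (d * p - b * q) (-c * p + a * q) := by
  have hR : (a : ℝ) * d - b * c = 1 := by exact_mod_cast h
  simp only [QR] at he
  apply Equiv.ext; rintro ⟨x, y, z⟩
  simp only [Fm, gg, affMap, QR, Equiv.Perm.mul_apply, Equiv.Perm.inv_def,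
    Equiv.coe_fn_mk, Equiv.coe_fn_symm_mk, Prod.mk.injEq]
  push_cast
  refine ⟨?_, ?_, ?_⟩
  · linear_combination (-(c:ℝ)*n*p*y - (b:ℝ)*n*q*z + (b:ℝ)*d*n*z/2 - (b:ℝ)*d*n*z^2/2
      - (b:ℝ)*c*n*y*z + (b:ℝ)*c^2*n*p*y + (b:ℝ)^2*c*n*q*z + (b:ℝ)^2*c*d*n*z^2/2
      + (b:ℝ)^2*c^2*n*y*z + (a:ℝ)*c*n*y/2 - (a:ℝ)*c*n*y^2/2 - (a:ℝ)*c*d*n*p*y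
      - (a:ℝ)*b*d*n*q*z - (a:ℝ)*b*d^2*n*z^2/2 - (a:ℝ)*b*c*d*n*y*z
      + (a:ℝ)*b*c^2*n*y^2/2 - (a:ℝ)^2*c*d*n*y^2/2) * hR + he
  · linear_combination y * hR
  · linear_combination z * hR

/-- For `a,b,c,d ∈ ℤ` with `ad − bc = 1`, the diffeomorphism
`F(x,y,z) = (x + n(bc·yz + (ac/2)(y²−y) + (bd/2)(z²−z)), ay+bz, cy+dz)`
normalizes `Γ_n = Γ_{n,0,0}`. -/
theorem stmt_10 (n : ℕ) (a b c d : ℤ) (h : a * d - b * c = 1) :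
    ∃ F : Equiv.Perm (ℝ × ℝ × ℝ),
      (∀ x y z : ℝ, F (x, y, z) =
        (x + (n : ℝ) * ((b : ℝ) * (c : ℝ) * y * z + ((a : ℝ) * (c : ℝ) / 2) * (y ^ 2 - y)
            + ((b : ℝ) * (d : ℝ) / 2) * (z ^ 2 - z)),
          (a : ℝ) * y + (b : ℝ) * z, (c : ℝ) * y + (d : ℝ) * z)) ∧
      F ∈ Subgroup.normalizer (Gamma n 0 0 : Set (Equiv.Perm (ℝ × ℝ × ℝ))) := by
  refine ⟨Fm n a b c d h, fun x y z => rfl, ?_⟩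
  rw [Subgroup.mem_normalizer_iff]
  intro π
  constructor
  · intro hπ
    obtain ⟨m, p, q, rfl⟩ := (mem_gamma_iff n π).1 hπ
    obtain ⟨e, he⟩ := QR_int n a b c d p q
    rw [conj1 n a b c d h m p q e he]
    exact gg_mem n _ _ _
  · intro hπ
    obtain ⟨m, p, q, hg⟩ := (mem_gamma_iff n _).1 hπ
    obtain ⟨e, he⟩ := QR_int n a b c d (d * p - b * q) (-c * p + a * q)
    have he' : (e : ℝ) = QR n a b c d ((d : ℝ) * p - (b : ℝ) * q) (-(c : ℝ) * p + (a : ℝ) * q) := by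
      rw [he]; simp only [QR]; push_cast; ring
    have hπ2 : π = (Fm n a b c d h)⁻¹ * gg n m p q * Fm n a b c d h := by
      rw [← hg]; group
    rw [hπ2, conj2 n a b c d h m p q e he']
    exact gg_mem n _ _ _
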